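/- (Finite-termination bound from Theorem 2.) Let k ∈ ℕ and let (β^{(t)})_{t≥0} be a sequence in ℝ^p with ‖β^{(0)}‖₀ ≤ k such that for every t, β^{(t+1)} is a minimizer of γ ↦ h(γ; β^{(t)}) over {γ : ‖γ‖₀ ≤ k}. Suppose ϑ > ρ₁μ/n and that ℓ(β) ≥ ℓ* for every β with ‖β‖₀ ≤ k, for some ℓ* ∈ ℝ. Then for every K ∈ ℕ, min_{0 ≤ t ≤ K} ‖β^{(t+1)} − β^{(t)}‖₂² ≤ 2(ℓ(β^{(0)}) − ℓ*)/((K+1)(ϑ − ρ₁μ/n)). In particular, for any ε > 0, if (K+1) ≥ 2(ℓ(β^{(0)}) − ℓ*)/(ε²(ϑ − ρ₁μ/n)) then there exists t ≤ K with ‖β^{(t+1)} − β^{(t)}‖₂ ≤ ε. -/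

import Mathlib

open scoped BigOperators RealInnerProductSpace

noncomputable section

/-- GLM negative log-likelihood `L(β) = (1/n) ∑ⱼ [b(Xⱼᵀβ) − yⱼ Xⱼᵀβ]`. -/
def glmLoss {n p : ℕ} (X : Fin n → EuclideanSpace ℝ (Fin p)) (y : Fin n → ℝ)
    (b : ℝ → ℝ) (β : EuclideanSpace ℝ (Fin p)) : ℝ :=
  (1 / (n : ℝ)) * ∑ j, (b ⟪X j, β⟫ - y j * ⟪X j, β⟫)

/-- Surrogate loss `ℓ(β) = L(β) − βᵀv`. -/
def surrLoss {n p : ℕ} (X : Fin n → EuclideanSpace ℝ (Fin p)) (y : Fin n → ℝ)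
    (b : ℝ → ℝ) (v : EuclideanSpace ℝ (Fin p)) (β : EuclideanSpace ℝ (Fin p)) : ℝ :=
  glmLoss X y b β - ⟪β, v⟫

/-- Gradient of the surrogate loss:
`∇ℓ(β) = (1/n) ∑ⱼ (b'(Xⱼᵀβ) − yⱼ) Xⱼ − v`. -/
def surrGrad {n p : ℕ} (X : Fin n → EuclideanSpace ℝ (Fin p)) (y : Fin n → ℝ)
    (b : ℝ → ℝ) (v : EuclideanSpace ℝ (Fin p)) (β : EuclideanSpace ℝ (Fin p)) :
    EuclideanSpace ℝ (Fin p) :=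
  (1 / (n : ℝ)) • (∑ j, (deriv b ⟪X j, β⟫ - y j) • X j) - v

/-- Quadratic approximation `h(γ; β) = ℓ(β) + ⟨γ − β, ∇ℓ(β)⟩ + (ϑ/2)‖γ − β‖₂²`. -/
def quadApprox {n p : ℕ} (X : Fin n → EuclideanSpace ℝ (Fin p)) (y : Fin n → ℝ)
    (b : ℝ → ℝ) (v : EuclideanSpace ℝ (Fin p)) (ϑ : ℝ)
    (γ β : EuclideanSpace ℝ (Fin p)) : ℝ :=
  surrLoss X y b v β + ⟪γ - β, surrGrad X y b v β⟫ + ϑ / 2 * ‖γ - β‖ ^ 2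

/-- The ℓ₀ "norm": number of nonzero coordinates. -/
def normZero {p : ℕ} (β : EuclideanSpace ℝ (Fin p)) : ℕ :=
  {j | β j ≠ 0}.ncard


section AuxLemmas

lemma tangent_aux' {g : ℝ → ℝ} (hc : ConvexOn ℝ Set.univ g) (hd : Differentiable ℝ g)
    (x y : ℝ) : g x + deriv g x * (y - x) ≤ g y := by
  rcases lt_trichotomy x y with h | h | h
  · have := hc.deriv_le_slope (Set.mem_univ x) (Set.mem_univ y) h (hd x)
    rw [slope_def_field, le_div_iff₀ (by linarith)] at this
    linarith
  · subst h; simp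
  · have := hc.slope_le_deriv (Set.mem_univ y) (Set.mem_univ x) h (hd x)
    rw [slope_def_field, div_le_iff₀ (by linarith)] at this
    linarith

lemma taylor_bound' {b : ℝ → ℝ} {μ : ℝ} (hb : ContDiff ℝ 2 b)
    (hb'' : ∀ θ : ℝ, 0 ≤ deriv (deriv b) θ ∧ deriv (deriv b) θ ≤ μ) (t u : ℝ) :
    b u - b t - deriv b t * (u - t) ≤ μ / 2 * (u - t) ^ 2 := by
  have h2 : ContDiff ℝ (1 + 1) b := by norm_num at hb ⊢; exact hb
  rw [contDiff_succ_iff_deriv] at h2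
  have hbd : Differentiable ℝ b := h2.1
  have hbd' : Differentiable ℝ (deriv b) := h2.2.2.differentiable (by norm_num)
  set g : ℝ → ℝ := fun x => μ / 2 * x ^ 2 - b x with hg
  have hgd : ∀ x, HasDerivAt g (μ * x - deriv b x) x := by
    intro x
    have h1 : HasDerivAt (fun x : ℝ => μ / 2 * x ^ 2) (μ * x) x := by
      have := (hasDerivAt_pow 2 x).const_mul (μ / 2)
      exact this.congr_deriv (by push_cast; ring)
    exact h1.sub (hbd x).hasDerivAt
  have hgderiv : deriv g = fun x => μ * x - deriv b x := funext fun x => (hgd x).deriv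
  have hgdiff : Differentiable ℝ g := fun x => (hgd x).differentiableAt
  have hgd2 : Differentiable ℝ (deriv g) := by
    rw [hgderiv]
    exact (differentiable_id.const_mul μ).sub hbd'
  have hcvx : ConvexOn ℝ Set.univ g := by
    apply convexOn_univ_of_deriv2_nonneg hgdiff hgd2
    intro x
    have hder2 : deriv (deriv g) x = μ - deriv (deriv b) x := by
      rw [hgderiv]
      have : HasDerivAt (fun x => μ * x - deriv b x) (μ * 1 - deriv (deriv b) x) x :=
        ((hasDerivAt_id x).const_mul μ).sub (hbd' x).hasDerivAt
      simpa using this.deriv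
    simp only [Function.iterate_succ, Function.iterate_zero, Function.comp_apply, id_eq]
    rw [hder2]
    linarith [(hb'' x).2]
  have := tangent_aux' hcvx hgdiff t u
  rw [hgderiv] at this
  simp only [hg] at this
  nlinarith [this]

lemma sum3_swap' {n p : ℕ} (X : Fin n → Fin p → ℝ) (u E : Fin p → ℝ) :
    ∑ x : Fin n, (∑ a : Fin p, X x a * u a) * ∑ b : Fin p, X x b * E b =
    ∑ x : Fin p, u x * ∑ y : Fin p, (∑ z : Fin n, X z x * X z y) * E y := by
  have lhs : ∑ x : Fin n, (∑ a : Fin p, X x a * u a) * ∑ b : Fin p, X x b * E b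
      = ∑ x : Fin n, ∑ a : Fin p, ∑ b : Fin p, X x a * u a * (X x b * E b) := by
    refine Finset.sum_congr rfl fun j _ => ?_
    rw [Finset.sum_mul]
    exact Finset.sum_congr rfl fun a _ => by rw [Finset.mul_sum]
  have rhs : ∑ x : Fin p, u x * ∑ y : Fin p, (∑ z : Fin n, X z x * X z y) * E y
      = ∑ x : Fin p, ∑ y : Fin p, ∑ z : Fin n, X z x * u x * (X z y * E y) := by
    refine Finset.sum_congr rfl fun a _ => ?_
    simp only [Finset.mul_sum, Finset.sum_mul]
    refine Finset.sum_congr rfl fun y _ => Finset.sum_congr rfl fun z _ => by ring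
  rw [lhs, rhs, Finset.sum_comm]
  exact Finset.sum_congr rfl fun a _ => by rw [Finset.sum_comm]

open Matrix in
lemma quad_form_le' {n p : ℕ}
    (X : Fin n → EuclideanSpace ℝ (Fin p)) (ρ₁ : ℝ)
    (hρ₁ : IsGreatest
      (Set.range (Matrix.isHermitian_conjTranspose_mul_self
        (Matrix.of fun j i => X j i : Matrix (Fin n) (Fin p) ℝ)).eigenvalues) ρ₁)
    (w : EuclideanSpace ℝ (Fin p)) :
    ∑ j, ⟪X j, w⟫ ^ 2 ≤ ρ₁ * ‖w‖ ^ 2 := by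
  set A : Matrix (Fin n) (Fin p) ℝ := (Matrix.of fun j i => X j i) with hA
  set hM := Matrix.isHermitian_conjTranspose_mul_self A with hMdef
  set e := hM.eigenvectorBasis with he
  set lam := hM.eigenvalues with hlam
  have hinner : ∀ (u v : EuclideanSpace ℝ (Fin p)), ⟪u, v⟫ = ∑ i, u i * v i := by
    intro u v
    simp [PiLp.inner_apply, RCLike.inner_apply, mul_comm]
  have hcore : ∀ (u : EuclideanSpace ℝ (Fin p)) (i : Fin p),
      ∑ j, ⟪X j, u⟫ * ⟪X j, (e i : EuclideanSpace ℝ (Fin p))⟫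
        = lam i * ⟪u, (e i : EuclideanSpace ℝ (Fin p))⟫ := by
    intro u i
    have heig : (Aᴴ * A) *ᵥ ⇑(e i) = lam i • ⇑(e i) := hM.mulVec_eigenvectorBasis i
    have lhs_eq : ∑ j, ⟪X j, u⟫ * ⟪X j, (e i : EuclideanSpace ℝ (Fin p))⟫
        = ∑ a, u a * (((Aᴴ * A) *ᵥ ⇑(e i)) a) := by
      simp only [hinner]
      simp only [Matrix.mulVec, Matrix.mul_apply, dotProduct, Matrix.conjTranspose_apply,
        star_trivial, hA, Matrix.of_apply]
      exact sum3_swap' (fun j a => X j a) (fun a => u a) (fun a => e i a)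
    rw [lhs_eq, heig]
    simp only [Pi.smul_apply, smul_eq_mul, hinner]
    rw [Finset.mul_sum]
    exact Finset.sum_congr rfl fun a _ => by ring
  have hw : ∑ i, ⟪(e i : EuclideanSpace ℝ (Fin p)), w⟫ • (e i : EuclideanSpace ℝ (Fin p)) = w := by
    simpa [← OrthonormalBasis.repr_apply_apply] using e.sum_repr w
  have expand : ∑ j, ⟪X j, w⟫ ^ 2
      = ∑ i, lam i * (⟪w, (e i : EuclideanSpace ℝ (Fin p))⟫
          * ⟪(e i : EuclideanSpace ℝ (Fin p)), w⟫) := by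
    calc ∑ j, ⟪X j, w⟫ ^ 2 = ∑ j, ⟪X j, w⟫ * ⟪X j, w⟫ :=
          Finset.sum_congr rfl fun j _ => sq (⟪X j, w⟫)
      _ = ∑ j, ⟪X j, w⟫
            * ⟪X j, ∑ i, ⟪(e i : EuclideanSpace ℝ (Fin p)), w⟫
                • (e i : EuclideanSpace ℝ (Fin p))⟫ := by rw [hw]
      _ = ∑ j, ∑ i, ⟪(e i : EuclideanSpace ℝ (Fin p)), w⟫
            * (⟪X j, w⟫ * ⟪X j, (e i : EuclideanSpace ℝ (Fin p))⟫) := by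
          refine Finset.sum_congr rfl fun j _ => ?_
          rw [inner_sum, Finset.mul_sum]
          refine Finset.sum_congr rfl fun i _ => ?_
          rw [real_inner_smul_right]; ring
      _ = ∑ i, ⟪(e i : EuclideanSpace ℝ (Fin p)), w⟫
            * (lam i * ⟪w, (e i : EuclideanSpace ℝ (Fin p))⟫) := by
          rw [Finset.sum_comm]
          refine Finset.sum_congr rfl fun i _ => ?_
          rw [← Finset.mul_sum, hcore]
      _ = _ := Finset.sum_congr rfl fun i _ => by ring
  rw [expand]
  have hbound : ∀ i : Fin p, lam i * (⟪w, (e i : EuclideanSpace ℝ (Fin p))⟫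
        * ⟪(e i : EuclideanSpace ℝ (Fin p)), w⟫)
      ≤ ρ₁ * (⟪w, (e i : EuclideanSpace ℝ (Fin p))⟫
        * ⟪(e i : EuclideanSpace ℝ (Fin p)), w⟫) := by
    intro i
    have h1 : lam i ≤ ρ₁ := hρ₁.2 ⟨i, rfl⟩
    have h2 : 0 ≤ ⟪w, (e i : EuclideanSpace ℝ (Fin p))⟫
        * ⟪(e i : EuclideanSpace ℝ (Fin p)), w⟫ := by
      rw [real_inner_comm w]; exact mul_self_nonneg _
    exact mul_le_mul_of_nonneg_right h1 h2
  calc ∑ i, lam i * (⟪w, (e i : EuclideanSpace ℝ (Fin p))⟫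
          * ⟪(e i : EuclideanSpace ℝ (Fin p)), w⟫)
      ≤ ∑ i, ρ₁ * (⟪w, (e i : EuclideanSpace ℝ (Fin p))⟫
          * ⟪(e i : EuclideanSpace ℝ (Fin p)), w⟫) :=
        Finset.sum_le_sum fun i _ => hbound i
    _ = ρ₁ * ∑ i, ⟪w, (e i : EuclideanSpace ℝ (Fin p))⟫
          * ⟪(e i : EuclideanSpace ℝ (Fin p)), w⟫ := by rw [Finset.mul_sum]
    _ = ρ₁ * ‖w‖ ^ 2 := by rw [e.sum_inner_mul_inner, real_inner_self_eq_norm_sq]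

lemma surr_identity' {n p : ℕ} (X : Fin n → EuclideanSpace ℝ (Fin p)) (y : Fin n → ℝ)
    (b : ℝ → ℝ) (v : EuclideanSpace ℝ (Fin p)) (γ β : EuclideanSpace ℝ (Fin p)) :
    surrLoss X y b v γ - surrLoss X y b v β - ⟪γ - β, surrGrad X y b v β⟫
      = (1 / (n : ℝ)) * ∑ j, (b ⟪X j, γ⟫ - b ⟪X j, β⟫
          - deriv b ⟪X j, β⟫ * (⟪X j, γ⟫ - ⟪X j, β⟫)) := by
  have hGrad : ⟪γ - β, surrGrad X y b v β⟫
      = (1 / (n : ℝ)) * ∑ j, (deriv b ⟪X j, β⟫ - y j) * (⟪X j, γ⟫ - ⟪X j, β⟫)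
        - ⟪γ - β, v⟫ := by
    rw [surrGrad, inner_sub_right, real_inner_smul_right, inner_sum]
    congr 2
    refine Finset.sum_congr rfl fun j _ => ?_
    rw [real_inner_smul_right,
      show ⟪γ - β, X j⟫ = ⟪X j, γ⟫ - ⟪X j, β⟫ from by
        rw [← inner_sub_right]; exact real_inner_comm _ _]
  have hv : ⟪γ - β, v⟫ = ⟪γ, v⟫ - ⟪β, v⟫ := inner_sub_left _ _ _
  have hsplit : ∑ j, (b ⟪X j, γ⟫ - b ⟪X j, β⟫ - deriv b ⟪X j, β⟫ * (⟪X j, γ⟫ - ⟪X j, β⟫))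
      = ∑ j, (b ⟪X j, γ⟫ - y j * ⟪X j, γ⟫) - ∑ j, (b ⟪X j, β⟫ - y j * ⟪X j, β⟫)
        - ∑ j, (deriv b ⟪X j, β⟫ - y j) * (⟪X j, γ⟫ - ⟪X j, β⟫) := by
    rw [← Finset.sum_sub_distrib, ← Finset.sum_sub_distrib]
    exact Finset.sum_congr rfl fun j _ => by ring
  rw [hGrad, surrLoss, surrLoss, glmLoss, glmLoss, hv, hsplit]
  ring

lemma descent_lemma' {n p : ℕ} (hn : 0 < n)
    (X : Fin n → EuclideanSpace ℝ (Fin p)) (y : Fin n → ℝ)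
    (b : ℝ → ℝ) (μ : ℝ) (hμ : 0 ≤ μ) (hb : ContDiff ℝ 2 b)
    (hb'' : ∀ θ : ℝ, 0 ≤ deriv (deriv b) θ ∧ deriv (deriv b) θ ≤ μ)
    (v : EuclideanSpace ℝ (Fin p)) (ρ₁ : ℝ)
    (hρ₁ : IsGreatest
      (Set.range (Matrix.isHermitian_conjTranspose_mul_self
        (Matrix.of fun j i => X j i : Matrix (Fin n) (Fin p) ℝ)).eigenvalues) ρ₁)
    (γ β : EuclideanSpace ℝ (Fin p)) :
    surrLoss X y b v γ ≤ surrLoss X y b v β + ⟪γ - β, surrGrad X y b v β⟫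
      + (ρ₁ * μ / n) / 2 * ‖γ - β‖ ^ 2 := by
  have hid := surr_identity' X y b v γ β
  have hterm : ∀ j : Fin n, b ⟪X j, γ⟫ - b ⟪X j, β⟫
      - deriv b ⟪X j, β⟫ * (⟪X j, γ⟫ - ⟪X j, β⟫) ≤ μ / 2 * ⟪X j, γ - β⟫ ^ 2 := by
    intro j
    have e1 : ⟪X j, γ - β⟫ = ⟪X j, γ⟫ - ⟪X j, β⟫ := inner_sub_right _ _ _
    rw [e1]
    exact taylor_bound' hb hb'' (⟪X j, β⟫) (⟪X j, γ⟫)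
  have hsum1 : ∑ j, (b ⟪X j, γ⟫ - b ⟪X j, β⟫
      - deriv b ⟪X j, β⟫ * (⟪X j, γ⟫ - ⟪X j, β⟫)) ≤ μ / 2 * (ρ₁ * ‖γ - β‖ ^ 2) := by
    calc ∑ j, (b ⟪X j, γ⟫ - b ⟪X j, β⟫ - deriv b ⟪X j, β⟫ * (⟪X j, γ⟫ - ⟪X j, β⟫))
        ≤ ∑ j, μ / 2 * ⟪X j, γ - β⟫ ^ 2 := Finset.sum_le_sum fun j _ => hterm j
      _ = μ / 2 * ∑ j, ⟪X j, γ - β⟫ ^ 2 := by rw [Finset.mul_sum]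
      _ ≤ μ / 2 * (ρ₁ * ‖γ - β‖ ^ 2) :=
          mul_le_mul_of_nonneg_left (quad_form_le' X ρ₁ hρ₁ (γ - β)) (by linarith)
  have hn' : (0 : ℝ) < (n : ℝ) := Nat.cast_pos.mpr hn
  have h1n : (0 : ℝ) ≤ 1 / (n : ℝ) := by positivity
  have := mul_le_mul_of_nonneg_left hsum1 h1n
  rw [← hid] at this
  have heq : 1 / (n : ℝ) * (μ / 2 * (ρ₁ * ‖γ - β‖ ^ 2)) = (ρ₁ * μ / n) / 2 * ‖γ - β‖ ^ 2 := by
    field_simp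
  linarith [this, heq ▸ this]

end AuxLemmas

/-- Finite-termination bound from Theorem 2: along the DIHT iterates,
`min_{0 ≤ t ≤ K} ‖β^{(t+1)} − β^{(t)}‖₂² ≤ 2(ℓ(β⁰) − ℓ*)/((K+1)(ϑ − ρ₁μ/n))`,
and the algorithm meets the tolerance `ε` within the stated number of steps. -/
theorem DIHT_finite_termination
    {n p : ℕ} (hn : 0 < n)
    (X : Fin n → EuclideanSpace ℝ (Fin p)) (y : Fin n → ℝ)
    (b : ℝ → ℝ) (μ : ℝ) (hμ : 0 < μ) (hb : ContDiff ℝ 2 b)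
    (hb'' : ∀ θ : ℝ, 0 ≤ deriv (deriv b) θ ∧ deriv (deriv b) θ ≤ μ)
    (v : EuclideanSpace ℝ (Fin p))
    (ρ₁ : ℝ)
    (hρ₁ : IsGreatest
      (Set.range (Matrix.isHermitian_conjTranspose_mul_self
        (Matrix.of fun j i => X j i : Matrix (Fin n) (Fin p) ℝ)).eigenvalues) ρ₁)
    (ϑ : ℝ) (hϑpos : 0 < ϑ) (hϑ : ρ₁ * μ / n < ϑ)
    (k : ℕ) (B : ℕ → EuclideanSpace ℝ (Fin p))
    (hB0 : normZero (B 0) ≤ k)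
    (hBstep : ∀ t : ℕ, normZero (B (t + 1)) ≤ k ∧
      ∀ γ : EuclideanSpace ℝ (Fin p), normZero γ ≤ k →
        quadApprox X y b v ϑ (B (t + 1)) (B t) ≤ quadApprox X y b v ϑ γ (B t))
    (lstar : ℝ)
    (hlb : ∀ β : EuclideanSpace ℝ (Fin p), normZero β ≤ k → lstar ≤ surrLoss X y b v β) :
    (∀ K : ℕ, ∃ t ≤ K, ‖B (t + 1) - B t‖ ^ 2 ≤
        2 * (surrLoss X y b v (B 0) - lstar) / ((K + 1) * (ϑ - ρ₁ * μ / n))) ∧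
    (∀ ε : ℝ, 0 < ε → ∀ K : ℕ,
        2 * (surrLoss X y b v (B 0) - lstar) / (ε ^ 2 * (ϑ - ρ₁ * μ / n)) ≤ (K + 1 : ℝ) →
        ∃ t ≤ K, ‖B (t + 1) - B t‖ ≤ ε) := by
    classical
  have hn' : (0 : ℝ) < (n : ℝ) := Nat.cast_pos.mpr hn
  have hc' : (0 : ℝ) < ϑ - ρ₁ * μ / n := by linarith
  have sparse : ∀ t : ℕ, normZero (B t) ≤ k := by
    intro t
    cases t with
    | zero => exact hB0
    | succ t => exact (hBstep t).1
  have step : ∀ t : ℕ, surrLoss X y b v (B (t + 1))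
      + (ϑ - ρ₁ * μ / n) / 2 * ‖B (t + 1) - B t‖ ^ 2 ≤ surrLoss X y b v (B t) := by
    intro t
    have hmin := (hBstep t).2 (B t) (sparse t)
    have hq : quadApprox X y b v ϑ (B t) (B t) = surrLoss X y b v (B t) := by
      simp [quadApprox]
    have hdes := descent_lemma' hn X y b μ hμ.le hb hb'' v ρ₁ hρ₁ (B (t + 1)) (B t)
    rw [hq] at hmin
    rw [quadApprox] at hmin
    nlinarith [sq_nonneg (‖B (t + 1) - B t‖)]
  have telescope : ∀ K : ℕ, (ϑ - ρ₁ * μ / n) / 2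
      * ∑ t ∈ Finset.range (K + 1), ‖B (t + 1) - B t‖ ^ 2
      ≤ surrLoss X y b v (B 0) - surrLoss X y b v (B (K + 1)) := by
    intro K
    induction K with
    | zero =>
      rw [Finset.sum_range_one]
      linarith [step 0]
    | succ K ih =>
      rw [Finset.sum_range_succ, mul_add]
      linarith [step (K + 1)]
  have total : ∀ K : ℕ, (ϑ - ρ₁ * μ / n) / 2
      * ∑ t ∈ Finset.range (K + 1), ‖B (t + 1) - B t‖ ^ 2
      ≤ surrLoss X y b v (B 0) - lstar := by
    intro K
    have := hlb (B (K + 1)) (sparse (K + 1))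
    linarith [telescope K]
  have part1 : ∀ K : ℕ, ∃ t ≤ K, ‖B (t + 1) - B t‖ ^ 2 ≤
      2 * (surrLoss X y b v (B 0) - lstar) / ((K + 1) * (ϑ - ρ₁ * μ / n)) := by
    intro K
    obtain ⟨t₀, ht₀mem, ht₀min⟩ := Finset.exists_min_image (Finset.range (K + 1))
      (fun t => ‖B (t + 1) - B t‖ ^ 2) ⟨0, Finset.mem_range.mpr (Nat.succ_pos K)⟩
    refine ⟨t₀, Nat.lt_succ_iff.mp (Finset.mem_range.mp ht₀mem), ?_⟩
    have hcard : ((K : ℝ) + 1) * ‖B (t₀ + 1) - B t₀‖ ^ 2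
        ≤ ∑ t ∈ Finset.range (K + 1), ‖B (t + 1) - B t‖ ^ 2 := by
      have h := Finset.sum_le_sum (fun t ht => ht₀min t ht)
      calc ((K : ℝ) + 1) * ‖B (t₀ + 1) - B t₀‖ ^ 2
          = ∑ _t ∈ Finset.range (K + 1), ‖B (t₀ + 1) - B t₀‖ ^ 2 := by
            rw [Finset.sum_const, Finset.card_range]; push_cast; ring
        _ ≤ _ := h
    have hKpos : (0 : ℝ) < ((K : ℝ) + 1) * (ϑ - ρ₁ * μ / n) := by positivity
    rw [le_div_iff₀ hKpos]
    nlinarith [hcard, total K, hc',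
      mul_le_mul_of_nonneg_left hcard (le_of_lt (half_pos hc'))]
  refine ⟨part1, ?_⟩
  intro ε hε K hK
  obtain ⟨t, htK, ht⟩ := part1 K
  refine ⟨t, htK, ?_⟩
  have hD : 0 ≤ surrLoss X y b v (B 0) - lstar := by linarith [hlb (B 0) hB0]
  have hεc : (0 : ℝ) < ε ^ 2 * (ϑ - ρ₁ * μ / n) := by positivity
  have h2D : 2 * (surrLoss X y b v (B 0) - lstar)
      ≤ ((K : ℝ) + 1) * (ε ^ 2 * (ϑ - ρ₁ * μ / n)) := by
    rw [div_le_iff₀ hεc] at hK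
    nlinarith [hK]
  have hKpos : (0 : ℝ) < ((K : ℝ) + 1) * (ϑ - ρ₁ * μ / n) := by positivity
  have hsq : ‖B (t + 1) - B t‖ ^ 2 ≤ ε ^ 2 := by
    have hdd : 2 * (surrLoss X y b v (B 0) - lstar) / (((K : ℝ) + 1) * (ϑ - ρ₁ * μ / n))
        ≤ ε ^ 2 := by
      rw [div_le_iff₀ hKpos]
      nlinarith [h2D]
    exact le_trans ht hdd
  nlinarith [norm_nonneg (B (t + 1) - B t), hε, hsq]
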